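/- arXiv:0705.0427 — 2 statements merged into one kernel-verified Lean document; each statement's English description precedes it below -/
import Mathlib

section
/- Let 0<x<1 be real, and let r, s be complex numbers with 0<Re(r)<1 and Re(s)>1; set r* := r−1. Then for every complex z with |z|<1 the series ∑_{m=1}^∞ (1/m)·(1−x^{2rm})(1−x^{−2r*m})(1−x^{2(s−1)m})/(1−x^{2sm})·z^m converges absolutely, and its exponential f₁₁(z) satisfies the product formula f₁₁(z) = (1/(1−z)) · (x^{2s−2}z;x^{2s})_∞ (x^{2r}z;x^{2s})_∞ (x^{−2r*}z;x^{2s})_∞ / ( (x²z;x^{2s})_∞ (x^{2r*+2s}z;x^{2s})_∞ (x^{2s−2r}z;x^{2s})_∞ ). -/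
open Complex

/-- `x^w := exp(w · log x)` for real `x` and complex `w`. -/
noncomputable def xpow (x : ℝ) (w : ℂ) : ℂ := Complex.exp (w * (Real.log x : ℂ))

/-- The infinite `q`-Pochhammer product `(z;q)_∞ = ∏_{j=0}^∞ (1 − q^j z)`. -/
noncomputable def qPoch (z q : ℂ) : ℂ := ∏' j : ℕ, (1 - q ^ j * z)

/-- `Θ_q(z) = (z;q)_∞ (q z⁻¹;q)_∞ (q;q)_∞`. -/
noncomputable def jacTheta0 (q z : ℂ) : ℂ := qPoch z q * qPoch (q * z⁻¹) q * qPoch q q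

/-- The Jacobi theta function `[u]_r = x^{u²/r − u} Θ_{x^{2r}}(x^{2u}) / ((x^{2r};x^{2r})_∞)³`. -/
noncomputable def jTheta (x : ℝ) (r u : ℂ) : ℂ :=
  xpow x (u ^ 2 / r - u) * jacTheta0 (xpow x (2 * r)) (xpow x (2 * u)) /
    (qPoch (xpow x (2 * r)) (xpow x (2 * r))) ^ 3

/-- The `m`-th term of the defining series of `f₁₁(z)` (with `r* = r − 1`). -/
noncomputable def f11term (x : ℝ) (r s z : ℂ) (m : ℕ) : ℂ :=
  (1 / (m : ℂ)) * (1 - xpow x (2 * r * m)) * (1 - xpow x (-2 * (r - 1) * m)) *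
    (1 - xpow x (2 * (s - 1) * m)) / (1 - xpow x (2 * s * m)) * z ^ m

/-! ### Auxiliary lemmas -/

lemma xpow_nat (x : ℝ) (w : ℂ) (n : ℕ) : xpow x (w * n) = (xpow x w) ^ n := by
  rw [xpow, xpow, ← Complex.exp_nat_mul]
  ring_nf

lemma xpow_add (x : ℝ) (u v : ℂ) : xpow x u * xpow x v = xpow x (u + v) := by
  rw [xpow, xpow, xpow, ← Complex.exp_add]
  ring_nf

lemma norm_xpow (x : ℝ) (w : ℂ) : ‖xpow x w‖ = Real.exp (w.re * Real.log x) := by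
  rw [xpow, Complex.norm_exp]
  congr 1
  simp [Complex.mul_re]

lemma norm_xpow_lt_one {x : ℝ} (hx0 : 0 < x) (hx1 : x < 1) {w : ℂ} (hw : 0 < w.re) :
    ‖xpow x w‖ < 1 := by
  rw [norm_xpow, Real.exp_lt_one_iff]
  exact mul_neg_of_pos_of_neg hw (Real.log_neg hx0 hx1)

lemma one_sub_ne {w : ℂ} (h : ‖w‖ < 1) : 1 - w ≠ 0 := by
  intro h0
  rw [sub_eq_zero] at h0
  rw [← h0] at h
  simp at h

lemma norm_qjt_lt_one {t q : ℂ} (ht : ‖t‖ < 1) (hq : ‖q‖ < 1) (j : ℕ) : ‖q ^ j * t‖ < 1 := by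
  rw [norm_mul, norm_pow]
  calc ‖q‖ ^ j * ‖t‖ ≤ 1 * ‖t‖ := by
        gcongr
        exact pow_le_one₀ (norm_nonneg q) hq.le
    _ < 1 := by rwa [one_mul]

/-- shifted log series -/
lemma hasSum_neg_log {w : ℂ} (hw : ‖w‖ < 1) :
    HasSum (fun m : ℕ => w ^ (m + 1) / ((m + 1 : ℕ) : ℂ)) (-Complex.log (1 - w)) := by
  have H := Complex.hasSum_taylorSeries_neg_log hw
  have := (hasSum_nat_add_iff' (f := fun n : ℕ => w ^ n / (n : ℂ)) 1).2 H
  simpa using this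

set_option maxHeartbeats 1000000 in
/-- the key double-sum lemma -/
lemma hasSum_key {t q : ℂ} (ht : ‖t‖ < 1) (hq : ‖q‖ < 1) :
    HasSum (fun m : ℕ => t ^ (m + 1) / (((m + 1 : ℕ) : ℂ) * (1 - q ^ (m + 1))))
      (∑' j : ℕ, -Complex.log (1 - q ^ j * t)) := by
  have hFnorm : Summable fun p : ℕ × ℕ =>
      ‖(q ^ p.1 * t) ^ (p.2 + 1) / ((p.2 + 1 : ℕ) : ℂ)‖ := by
    have hg : Summable fun p : ℕ × ℕ => ‖q‖ ^ p.1 * ‖t‖ ^ (p.2 + 1) :=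
      Summable.mul_of_nonneg (f := fun j : ℕ => ‖q‖ ^ j)
        (g := fun m : ℕ => ‖t‖ ^ (m + 1))
        (summable_geometric_of_lt_one (norm_nonneg q) hq)
        ((summable_geometric_of_lt_one (norm_nonneg t) ht).comp_injective
          (add_left_injective 1))
        (fun _ => pow_nonneg (norm_nonneg q) _)
        (fun _ => pow_nonneg (norm_nonneg t) _)
    refine hg.of_nonneg_of_le (fun _ => norm_nonneg _) ?_
    rintro ⟨j, m⟩
    simp only [norm_div, norm_pow, norm_mul]
    calc (‖q‖ ^ j * ‖t‖) ^ (m + 1) / ‖((m + 1 : ℕ) : ℂ)‖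
        ≤ (‖q‖ ^ j * ‖t‖) ^ (m + 1) := by
          apply div_le_self (by positivity)
          rw [Complex.norm_natCast]
          exact_mod_cast Nat.one_le_iff_ne_zero.2 (Nat.succ_ne_zero m)
      _ = (‖q‖ ^ j) ^ (m + 1) * ‖t‖ ^ (m + 1) := by rw [mul_pow]
      _ ≤ ‖q‖ ^ j * ‖t‖ ^ (m + 1) := by
          gcongr
          exact pow_le_of_le_one (pow_nonneg (norm_nonneg q) j)
            (pow_le_one₀ (norm_nonneg q) hq.le) (Nat.succ_ne_zero m)
  have hFs : Summable fun p : ℕ × ℕ => (q ^ p.1 * t) ^ (p.2 + 1) / ((p.2 + 1 : ℕ) : ℂ) :=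
    hFnorm.of_norm
  have hrow : ∀ j : ℕ,
      HasSum (fun m : ℕ => (q ^ j * t) ^ (m + 1) / ((m + 1 : ℕ) : ℂ))
        (-Complex.log (1 - q ^ j * t)) := fun j =>
    hasSum_neg_log (norm_qjt_lt_one ht hq j)
  have houter : HasSum (fun j : ℕ => -Complex.log (1 - q ^ j * t))
      (∑' p : ℕ × ℕ, (q ^ p.1 * t) ^ (p.2 + 1) / ((p.2 + 1 : ℕ) : ℂ)) :=
    hFs.hasSum.prod_fiberwise hrow
  have hcol : ∀ m : ℕ,
      HasSum (fun j : ℕ => (q ^ j * t) ^ (m + 1) / ((m + 1 : ℕ) : ℂ))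
        (t ^ (m + 1) / (((m + 1 : ℕ) : ℂ) * (1 - q ^ (m + 1)))) := by
    intro m
    have hqm : ‖q ^ (m + 1)‖ < 1 := by
      rw [norm_pow]
      exact pow_lt_one₀ (norm_nonneg q) hq (Nat.succ_ne_zero m)
    have H := (hasSum_geometric_of_norm_lt_one hqm).mul_right
      (t ^ (m + 1) / ((m + 1 : ℕ) : ℂ))
    have hne : (1 - q ^ (m + 1)) ≠ 0 := one_sub_ne hqm
    have hnne : ((m + 1 : ℕ) : ℂ) ≠ 0 := Nat.cast_ne_zero.2 (Nat.succ_ne_zero m)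
    convert H using 1
    · rfl
    · funext j
      rw [mul_pow, ← pow_mul, mul_comm j (m + 1), pow_mul, mul_div_assoc]
    · rw [inv_mul_eq_div, div_div]
  have hFs' : Summable fun p : ℕ × ℕ => (q ^ p.2 * t) ^ (p.1 + 1) / ((p.1 + 1 : ℕ) : ℂ) :=
    hFs.prod_symm
  have hinner : HasSum (fun m : ℕ => t ^ (m + 1) / (((m + 1 : ℕ) : ℂ) * (1 - q ^ (m + 1))))
      (∑' p : ℕ × ℕ, (q ^ p.2 * t) ^ (p.1 + 1) / ((p.1 + 1 : ℕ) : ℂ)) :=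
    hFs'.hasSum.prod_fiberwise hcol
  have he : (∑' p : ℕ × ℕ, (q ^ p.2 * t) ^ (p.1 + 1) / ((p.1 + 1 : ℕ) : ℂ)) =
      ∑' p : ℕ × ℕ, (q ^ p.1 * t) ^ (p.2 + 1) / ((p.2 + 1 : ℕ) : ℂ) :=
    Equiv.tsum_eq (Equiv.prodComm ℕ ℕ)
      (fun p : ℕ × ℕ => (q ^ p.1 * t) ^ (p.2 + 1) / ((p.2 + 1 : ℕ) : ℂ))
  rw [he] at hinner
  rwa [← houter.tsum_eq] at hinner

/-- summability of the logs of the Pochhammer factors -/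
lemma summable_log_poch {t q : ℂ} (ht : ‖t‖ < 1) (hq : ‖q‖ < 1) :
    Summable fun j : ℕ => Complex.log (1 - q ^ j * t) := by
  apply Summable.of_norm
  have hg : Summable fun j : ℕ => ((1 - ‖t‖)⁻¹ / 2 + 1) * (‖t‖ * ‖q‖ ^ j) :=
    (((summable_geometric_of_lt_one (norm_nonneg q) hq)).mul_left ‖t‖).mul_left _
  refine hg.of_nonneg_of_le (fun _ => norm_nonneg _) ?_
  intro j
  have hw : ‖q ^ j * t‖ < 1 := norm_qjt_lt_one ht hq j
  set w := q ^ j * t with hwdef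
  have hb := Complex.norm_log_one_add_le (z := -w) (by rwa [norm_neg])
  rw [norm_neg] at hb
  have h1t : (0:ℝ) < 1 - ‖t‖ := by linarith
  have hwt : ‖w‖ ≤ ‖t‖ * ‖q‖ ^ j := by
    rw [hwdef, norm_mul, norm_pow, mul_comm]
  have hwle : ‖w‖ ≤ ‖t‖ := le_trans hwt (by
    calc ‖t‖ * ‖q‖ ^ j ≤ ‖t‖ * 1 := by
          gcongr
          exact pow_le_one₀ (norm_nonneg q) hq.le
      _ = ‖t‖ := mul_one _)
  calc ‖Complex.log (1 - w)‖ = ‖Complex.log (1 + -w)‖ := by rw [sub_eq_add_neg]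
    _ ≤ ‖w‖ ^ 2 * (1 - ‖w‖)⁻¹ / 2 + ‖w‖ := hb
    _ ≤ ‖w‖ * (1 - ‖t‖)⁻¹ / 2 + ‖w‖ := by
        have hsq : ‖w‖ ^ 2 ≤ ‖w‖ := by nlinarith [norm_nonneg w]
        have hinv : (1 - ‖w‖)⁻¹ ≤ (1 - ‖t‖)⁻¹ := inv_anti₀ h1t (by linarith)
        have hkey := mul_le_mul hsq hinv (inv_nonneg.2 (by linarith)) (norm_nonneg w)
        linarith
    _ = ((1 - ‖t‖)⁻¹ / 2 + 1) * ‖w‖ := by ring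
    _ ≤ ((1 - ‖t‖)⁻¹ / 2 + 1) * (‖t‖ * ‖q‖ ^ j) := by
        have hpos : (0:ℝ) ≤ (1 - ‖t‖)⁻¹ / 2 + 1 := by positivity
        exact mul_le_mul_of_nonneg_left hwt hpos

/-- exponential of the sum of minus-logs is the inverse Pochhammer product -/
lemma exp_log_sum {t q : ℂ} (ht : ‖t‖ < 1) (hq : ‖q‖ < 1) :
    Complex.exp (∑' j : ℕ, -Complex.log (1 - q ^ j * t)) = (qPoch t q)⁻¹ := by
  have hne : ∀ j : ℕ, (1 - q ^ j * t) ≠ 0 := fun j => one_sub_ne (norm_qjt_lt_one ht hq j)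
  have hsum := summable_log_poch ht hq
  have h0 := Complex.cexp_tsum_eq_tprod (f := fun j => 1 - q ^ j * t) hne hsum
  try simp only [Function.comp] at h0
  rw [tsum_neg, Complex.exp_neg, h0, qPoch]

/-- the algebraic expansion of the general term -/
lemma term_expand (a b c z : ℂ) (n : ℕ) (hn : n ≠ 0) (hq : (a * b * c) ^ n ≠ 1) :
    (1 / (n : ℂ)) * (1 - a ^ n) * (1 - b ^ n) * (1 - c ^ n) / (1 - (a * b * c) ^ n) * z ^ n =
      z ^ n / (n : ℂ) -
        (a * z) ^ n / ((n : ℂ) * (1 - (a * b * c) ^ n)) -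
        (b * z) ^ n / ((n : ℂ) * (1 - (a * b * c) ^ n)) -
        (c * z) ^ n / ((n : ℂ) * (1 - (a * b * c) ^ n)) +
        (a * b * z) ^ n / ((n : ℂ) * (1 - (a * b * c) ^ n)) +
        (a * c * z) ^ n / ((n : ℂ) * (1 - (a * b * c) ^ n)) +
        (b * c * z) ^ n / ((n : ℂ) * (1 - (a * b * c) ^ n)) := by
  have hn' : (n : ℂ) ≠ 0 := Nat.cast_ne_zero.2 hn
  have hq' : (1 - (a * b * c) ^ n) ≠ 0 := sub_ne_zero.2 fun h => hq h.symm
  rw [show z ^ n / (n : ℂ) = z ^ n * (1 - (a * b * c) ^ n) / ((n : ℂ) * (1 - (a * b * c) ^ n))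
    from (mul_div_mul_right _ _ hq').symm]
  simp only [div_eq_mul_inv, mul_inv, one_mul]
  ring

set_option maxHeartbeats 1000000 in
theorem stmt5 (x : ℝ) (hx0 : 0 < x) (hx1 : x < 1) (r s : ℂ)
    (hr0 : 0 < r.re) (hr1 : r.re < 1) (hs : 1 < s.re) (z : ℂ) (hz : ‖z‖ < 1) :
    Summable (fun m : ℕ => ‖f11term x r s z (m + 1)‖) ∧
    Complex.exp (∑' m : ℕ, f11term x r s z (m + 1)) =
      (1 / (1 - z)) *
        (qPoch (xpow x (2 * s - 2) * z) (xpow x (2 * s)) *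
          qPoch (xpow x (2 * r) * z) (xpow x (2 * s)) *
          qPoch (xpow x (-2 * (r - 1)) * z) (xpow x (2 * s))) /
        (qPoch (xpow x 2 * z) (xpow x (2 * s)) *
          qPoch (xpow x (2 * (r - 1) + 2 * s) * z) (xpow x (2 * s)) *
          qPoch (xpow x (2 * s - 2 * r) * z) (xpow x (2 * s))) := by
  set a := xpow x (2 * r) with ha
  set b := xpow x (-2 * (r - 1)) with hb
  set c := xpow x (2 * (s - 1)) with hc
  set q := xpow x (2 * s) with hq
  have habc : a * b * c = q := by
    rw [ha, hb, hc, hq, xpow_add, xpow_add]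
    congr 1
    ring
  have hna : ‖a‖ < 1 := norm_xpow_lt_one hx0 hx1 (by simp [Complex.mul_re]; linarith)
  have hnb : ‖b‖ < 1 := by
    apply norm_xpow_lt_one hx0 hx1
    have : ((-2 : ℂ) * (r - 1)).re = -2 * (r.re - 1) := by simp [Complex.mul_re, Complex.sub_re]
    rw [this]; linarith
  have hnc : ‖c‖ < 1 := by
    apply norm_xpow_lt_one hx0 hx1
    have : ((2 : ℂ) * (s - 1)).re = 2 * (s.re - 1) := by simp [Complex.mul_re, Complex.sub_re]
    rw [this]; linarith
  have hnq : ‖q‖ < 1 := norm_xpow_lt_one hx0 hx1 (by simp [Complex.mul_re]; linarith)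
  have hmul : ∀ u v : ℂ, ‖u‖ < 1 → ‖v‖ < 1 → ‖u * v‖ < 1 := by
    intro u v hu hv
    rw [norm_mul]
    calc ‖u‖ * ‖v‖ ≤ 1 * ‖v‖ := mul_le_mul_of_nonneg_right hu.le (norm_nonneg v)
      _ < 1 := by rwa [one_mul]
  have hab : ‖a * b‖ < 1 := hmul _ _ hna hnb
  have hac : ‖a * c‖ < 1 := hmul _ _ hna hnc
  have hbc : ‖b * c‖ < 1 := hmul _ _ hnb hnc
  have haz : ‖a * z‖ < 1 := hmul _ _ hna hz
  have hbz : ‖b * z‖ < 1 := hmul _ _ hnb hz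
  have hcz : ‖c * z‖ < 1 := hmul _ _ hnc hz
  have habz : ‖a * b * z‖ < 1 := hmul _ _ hab hz
  have hacz : ‖a * c * z‖ < 1 := hmul _ _ hac hz
  have hbcz : ‖b * c * z‖ < 1 := hmul _ _ hbc hz
  -- the power form of the term
  have hpow : ∀ m : ℕ, f11term x r s z (m + 1) =
      (1 / ((m + 1 : ℕ) : ℂ)) * (1 - a ^ (m + 1)) * (1 - b ^ (m + 1)) * (1 - c ^ (m + 1)) /
        (1 - q ^ (m + 1)) * z ^ (m + 1) := by
    intro m
    simp only [ha, hb, hc, hq, f11term, xpow_nat]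
  -- Summability of norms
  have hqn : ∀ m : ℕ, ‖q ^ (m + 1)‖ < 1 := fun m => by
    rw [norm_pow]; exact pow_lt_one₀ (norm_nonneg q) hnq (Nat.succ_ne_zero m)
  refine ⟨?_, ?_⟩
  · have hgeo : Summable fun m : ℕ => 8 / (1 - ‖q‖) * ‖z‖ ^ (m + 1) :=
      (((summable_geometric_of_lt_one (norm_nonneg z) hz).comp_injective
        (add_left_injective 1))).mul_left _
    refine hgeo.of_nonneg_of_le (fun _ => norm_nonneg _) ?_
    intro m
    rw [hpow m, norm_mul, norm_div, norm_mul, norm_mul, norm_mul, norm_pow]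
    have h1q : (0:ℝ) < 1 - ‖q‖ := by linarith
    have hQ : 1 - ‖q‖ ≤ ‖1 - q ^ (m + 1)‖ := by
      have := norm_sub_norm_le (1 : ℂ) (q ^ (m + 1))
      have h2 : ‖q ^ (m + 1)‖ ≤ ‖q‖ := by
        rw [norm_pow]
        exact pow_le_of_le_one (norm_nonneg q) hnq.le (Nat.succ_ne_zero m)
      simp only [norm_one] at this
      linarith
    have h1n : ‖(1 : ℂ) / ((m + 1 : ℕ) : ℂ)‖ ≤ 1 := by
      rw [norm_div, norm_one, Complex.norm_natCast]
      rw [div_le_one (by positivity)]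
      exact_mod_cast Nat.one_le_iff_ne_zero.2 (Nat.succ_ne_zero m)
    have hbd : ∀ u : ℂ, ‖u‖ < 1 → ‖1 - u‖ ≤ 2 := by
      intro u hu
      calc ‖1 - u‖ ≤ ‖(1:ℂ)‖ + ‖u‖ := norm_sub_le _ _
        _ ≤ 1 + 1 := by rw [norm_one]; exact add_le_add_right hu.le 1
        _ = 2 := by norm_num
    have hAn : ‖a ^ (m+1)‖ < 1 := by
      rw [norm_pow]; exact pow_lt_one₀ (norm_nonneg a) hna (Nat.succ_ne_zero m)
    have hBn : ‖b ^ (m+1)‖ < 1 := by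
      rw [norm_pow]; exact pow_lt_one₀ (norm_nonneg b) hnb (Nat.succ_ne_zero m)
    have hCn : ‖c ^ (m+1)‖ < 1 := by
      rw [norm_pow]; exact pow_lt_one₀ (norm_nonneg c) hnc (Nat.succ_ne_zero m)
    calc ‖(1 : ℂ) / ((m + 1 : ℕ) : ℂ)‖ * ‖1 - a ^ (m+1)‖ * ‖1 - b ^ (m+1)‖ * ‖1 - c ^ (m+1)‖ /
          ‖1 - q ^ (m+1)‖ * ‖z‖ ^ (m+1)
        ≤ 1 * 2 * 2 * 2 / (1 - ‖q‖) * ‖z‖ ^ (m+1) := by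
          gcongr <;> first
            | exact h1n
            | exact hbd _ hAn
            | exact hbd _ hBn
            | exact hbd _ hCn
      _ = 8 / (1 - ‖q‖) * ‖z‖ ^ (m+1) := by norm_num
  · -- the product formula
    have h1 : HasSum (fun m : ℕ => z ^ (m + 1) / ((m + 1 : ℕ) : ℂ)) (-Complex.log (1 - z)) :=
      hasSum_neg_log hz
    have hA := hasSum_key haz hnq
    have hB := hasSum_key hbz hnq
    have hC := hasSum_key hcz hnq
    have hAB := hasSum_key habz hnq
    have hAC := hasSum_key hacz hnq
    have hBC := hasSum_key hbcz hnq
    have Hcombo := ((((((h1.sub hA).sub hB).sub hC).add hAB).add hAC).add hBC)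
    have hfe : (fun m : ℕ => f11term x r s z (m + 1)) = fun m : ℕ =>
        z ^ (m+1) / ((m+1 : ℕ) : ℂ) -
        (a*z) ^ (m+1) / (((m+1 : ℕ) : ℂ) * (1 - q ^ (m+1))) -
        (b*z) ^ (m+1) / (((m+1 : ℕ) : ℂ) * (1 - q ^ (m+1))) -
        (c*z) ^ (m+1) / (((m+1 : ℕ) : ℂ) * (1 - q ^ (m+1))) +
        (a*b*z) ^ (m+1) / (((m+1 : ℕ) : ℂ) * (1 - q ^ (m+1))) +
        (a*c*z) ^ (m+1) / (((m+1 : ℕ) : ℂ) * (1 - q ^ (m+1))) +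
        (b*c*z) ^ (m+1) / (((m+1 : ℕ) : ℂ) * (1 - q ^ (m+1))) := by
      funext m
      rw [hpow m, ← habc]
      exact term_expand a b c z (m + 1) (Nat.succ_ne_zero m)
        (by rw [habc]; exact fun h => absurd (h ▸ hqn m) (by simp))
    have Htotal : HasSum (fun m : ℕ => f11term x r s z (m + 1))
        (-Complex.log (1 - z)
          - (∑' j : ℕ, -Complex.log (1 - q ^ j * (a * z)))
          - (∑' j : ℕ, -Complex.log (1 - q ^ j * (b * z)))
          - (∑' j : ℕ, -Complex.log (1 - q ^ j * (c * z)))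
          + (∑' j : ℕ, -Complex.log (1 - q ^ j * (a * b * z)))
          + (∑' j : ℕ, -Complex.log (1 - q ^ j * (a * c * z)))
          + (∑' j : ℕ, -Complex.log (1 - q ^ j * (b * c * z)))) := by
      rw [hfe]
      exact Hcombo
    rw [Htotal.tsum_eq]
    have h1z : (1 : ℂ) - z ≠ 0 := one_sub_ne hz
    rw [Complex.exp_add, Complex.exp_add, Complex.exp_add, Complex.exp_sub, Complex.exp_sub,
      Complex.exp_sub, Complex.exp_neg, Complex.exp_log h1z,
      exp_log_sum haz hnq, exp_log_sum hbz hnq, exp_log_sum hcz hnq,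
      exp_log_sum habz hnq, exp_log_sum hacz hnq, exp_log_sum hbcz hnq]
    -- identify the xpow products
    have e1 : c * z = xpow x (2 * s - 2) * z := by
      rw [hc]; congr 2; ring
    have e2 : a * b = xpow x 2 := by
      rw [ha, hb, xpow_add]; congr 1; ring
    have e3 : a * c = xpow x (2 * (r - 1) + 2 * s) := by
      rw [ha, hc, xpow_add]; congr 1; ring
    have e4 : b * c = xpow x (2 * s - 2 * r) := by
      rw [hb, hc, xpow_add]; congr 1; ring
    rw [← e1, ← e2, ← e3, ← e4]
    simp only [div_eq_mul_inv, mul_inv, inv_inv, one_mul]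
    ring
end

section
/- Let 0<x<1 be real, s∈ℂ with Re(s)>0, r∈ℂ, r* := r−1, and assume [1]_s ≠ 0, [r]_s ≠ 0 and [r*]_s ≠ 0. Define F(u) := [u+1]_s[u+r*]_s/([u]_s[u+r]_s). Although F(u) and F(−u) each have a simple pole at u=0 (coming from the simple zero of [u]_s at u=0), their sum u ↦ F(u) + F(−u) has a removable singularity at u=0, i.e. it extends to a holomorphic function on a neighbourhood of 0. -/
open Complex

namespace Stmt11

/-- The tail product `∏_{j≥0} (1 - q^{j+m} e^{cu})`. -/
noncomputable def PP (q c : ℂ) (m : ℕ) (u : ℂ) : ℂ :=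
  ∏' j : ℕ, (1 - q ^ (j + m) * Complex.exp (c * u))

lemma hasProd_nat_add_monoid {f : ℕ → ℂ} {a : ℂ} (k : ℕ) (h : HasProd (fun n => f (n + k)) a) :
    HasProd f ((∏ i ∈ Finset.range k, f i) * a) := by
  refine HasProd.mul_compl (s := ((Finset.range k : Finset ℕ) : Set ℕ)) ((Finset.range k).hasProd f) ?_
  have h2 : HasProd ((f ∘ (↑) : {n // n ∉ Finset.range k} → ℂ) ∘ (notMemRangeEquiv k).symm) a := by
    simpa [Function.comp_def] using h
  exact ((notMemRangeEquiv k).symm.hasProd_iff).1 h2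

lemma norm_term_le {q : ℂ} (hq : ‖q‖ < 1) {c u : ℂ} {N : ℕ}
    (hb : ‖q‖ ^ N * ‖Complex.exp (c * u)‖ ≤ 1 / 2) (j : ℕ) :
    ‖q ^ (j + N) * Complex.exp (c * u)‖ ≤ ‖q‖ ^ j * (1 / 2) := by
  rw [norm_mul, norm_pow, pow_add, mul_assoc]
  exact mul_le_mul_of_nonneg_left hb (pow_nonneg (norm_nonneg q) j)

lemma term_ne_zero {q : ℂ} (hq : ‖q‖ < 1) {c u : ℂ} {N : ℕ}
    (hb : ‖q‖ ^ N * ‖Complex.exp (c * u)‖ ≤ 1 / 2) (j : ℕ) :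
    (1 : ℂ) - q ^ (j + N) * Complex.exp (c * u) ≠ 0 := by
  intro hcon
  have h1 : q ^ (j + N) * Complex.exp (c * u) = 1 := by linear_combination -hcon
  have h2 := norm_term_le hq hb j
  rw [h1] at h2
  have : ‖q‖ ^ j ≤ 1 := pow_le_one₀ (norm_nonneg q) hq.le
  simp only [norm_one] at h2
  nlinarith [pow_nonneg (norm_nonneg q) j]

lemma summable_log {q : ℂ} (hq : ‖q‖ < 1) {c u : ℂ} {N : ℕ}
    (hb : ‖q‖ ^ N * ‖Complex.exp (c * u)‖ ≤ 1 / 2) :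
    Summable fun j : ℕ => Complex.log (1 - q ^ (j + N) * Complex.exp (c * u)) := by
  apply Summable.of_norm_bounded (g := fun j : ℕ => 3 / 4 * ‖q‖ ^ j)
  · exact (summable_geometric_of_lt_one (norm_nonneg q) hq).mul_left _
  · intro j
    have hble := norm_term_le hq hb j
    have h1 : ‖-(q ^ (j + N) * Complex.exp (c * u))‖ ≤ 1 / 2 := by
      rw [norm_neg]
      exact le_trans hble (by nlinarith [pow_le_one₀ (norm_nonneg q) hq.le (n := j)])
    have h2 := Complex.norm_log_one_add_half_le_self h1
    rw [show (1 : ℂ) + -(q ^ (j + N) * Complex.exp (c * u))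
        = 1 - q ^ (j + N) * Complex.exp (c * u) by ring, norm_neg] at h2
    nlinarith [norm_nonneg (q ^ (j + N) * Complex.exp (c * u))]

lemma PP_eq_exp_tsum {q : ℂ} (hq : ‖q‖ < 1) {c u : ℂ} {N : ℕ}
    (hb : ‖q‖ ^ N * ‖Complex.exp (c * u)‖ ≤ 1 / 2) :
    PP q c N u
      = Complex.exp (∑' j : ℕ, Complex.log (1 - q ^ (j + N) * Complex.exp (c * u))) := by
  have := Complex.cexp_tsum_eq_tprod
    (f := fun j => 1 - q ^ (j + N) * Complex.exp (c * u))
    (fun j => term_ne_zero hq hb j) (summable_log hq hb)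
  exact this.symm

lemma multipliable_PP {q : ℂ} (hq : ‖q‖ < 1) {c u : ℂ} {N : ℕ}
    (hb : ‖q‖ ^ N * ‖Complex.exp (c * u)‖ ≤ 1 / 2) :
    Multipliable fun j : ℕ => 1 - q ^ (j + N) * Complex.exp (c * u) :=
  Complex.multipliable_of_summable_log
    (f := fun j => 1 - q ^ (j + N) * Complex.exp (c * u))
    (summable_log hq hb)

lemma PP_ne_zero {q : ℂ} (hq : ‖q‖ < 1) {c u : ℂ} {N : ℕ}
    (hb : ‖q‖ ^ N * ‖Complex.exp (c * u)‖ ≤ 1 / 2) : PP q c N u ≠ 0 := by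
  rw [PP_eq_exp_tsum hq hb]; exact Complex.exp_ne_zero _

lemma exists_bound {q : ℂ} (hq : ‖q‖ < 1) (c u : ℂ) (m : ℕ) :
    ∃ k : ℕ, ‖q‖ ^ (m + k) * ‖Complex.exp (c * u)‖ ≤ 1 / 2 := by
  set M := ‖Complex.exp (c * u)‖ + 1 with hM
  have hM0 : 0 < M := by positivity
  obtain ⟨k, hk⟩ := exists_pow_lt_of_lt_one (by positivity : (0:ℝ) < 1 / 2 / M) hq
  refine ⟨k, ?_⟩
  have h1 : ‖q‖ ^ (m + k) ≤ ‖q‖ ^ k :=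
    pow_le_pow_of_le_one (norm_nonneg q) hq.le (Nat.le_add_left k m)
  have h2 : ‖Complex.exp (c * u)‖ ≤ M := le_add_of_nonneg_right zero_le_one
  calc ‖q‖ ^ (m + k) * ‖Complex.exp (c * u)‖ ≤ (1 / 2 / M) * M := by
        apply mul_le_mul (h1.trans hk.le) h2 (norm_nonneg _) (by positivity)
    _ = 1 / 2 := by field_simp


lemma multipliable_all {q : ℂ} (hq : ‖q‖ < 1) (c u : ℂ) (m : ℕ) :
    Multipliable fun j : ℕ => 1 - q ^ (j + m) * Complex.exp (c * u) := by
  obtain ⟨k, hk⟩ := exists_bound hq c u m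
  have htail : Multipliable fun j : ℕ => 1 - q ^ (j + (m + k)) * Complex.exp (c * u) :=
    multipliable_PP hq hk
  have h2 : HasProd (fun n : ℕ => 1 - q ^ ((n + k) + m) * Complex.exp (c * u))
      (∏' j : ℕ, (1 - q ^ (j + (m + k)) * Complex.exp (c * u))) := by
    have he : (fun n : ℕ => 1 - q ^ ((n + k) + m) * Complex.exp (c * u))
        = fun j : ℕ => 1 - q ^ (j + (m + k)) * Complex.exp (c * u) := by
      funext n; rw [show n + k + m = n + (m + k) from by ring]
    rw [he]; exact htail.hasProd
  exact (hasProd_nat_add_monoid (f := fun j : ℕ => 1 - q ^ (j + m) * Complex.exp (c * u)) k h2).multipliable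

lemma PP_split {q : ℂ} (hq : ‖q‖ < 1) (c u : ℂ) (m k : ℕ) :
    PP q c m u = (∏ j ∈ Finset.range k, (1 - q ^ (j + m) * Complex.exp (c * u)))
      * PP q c (m + k) u := by
  have htail : Multipliable fun j : ℕ => 1 - q ^ (j + (m + k)) * Complex.exp (c * u) :=
    multipliable_all hq c u (m + k)
  have h2 : HasProd (fun n : ℕ => 1 - q ^ ((n + k) + m) * Complex.exp (c * u)) (PP q c (m + k) u) := by
    have he : (fun n : ℕ => 1 - q ^ ((n + k) + m) * Complex.exp (c * u))
        = fun j : ℕ => 1 - q ^ (j + (m + k)) * Complex.exp (c * u) := by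
      funext n; rw [show n + k + m = n + (m + k) from by ring]
    rw [he]; exact htail.hasProd
  exact (hasProd_nat_add_monoid (f := fun j : ℕ => 1 - q ^ (j + m) * Complex.exp (c * u)) k h2).tprod_eq

lemma PP_diffOn {q : ℂ} (hq : ‖q‖ < 1) {c : ℂ} {N : ℕ} {U : Set ℂ} (hU : IsOpen U)
    (hb : ∀ u ∈ U, ‖q‖ ^ N * ‖Complex.exp (c * u)‖ ≤ 1 / 2) :
    DifferentiableOn ℂ (PP q c N) U := by
  have hS : DifferentiableOn ℂ
      (fun u => ∑' j : ℕ, Complex.log (1 - q ^ (j + N) * Complex.exp (c * u))) U := by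
    apply TendstoLocallyUniformlyOn.differentiableOn (F := fun (t : Finset ℕ) u =>
      ∑ j ∈ t, Complex.log (1 - q ^ (j + N) * Complex.exp (c * u)))
      (φ := Filter.atTop)
    · apply TendstoUniformlyOn.tendstoLocallyUniformlyOn
      apply tendstoUniformlyOn_tsum (u := fun j : ℕ => 3 / 4 * ‖q‖ ^ j)
        ((summable_geometric_of_lt_one (norm_nonneg q) hq).mul_left _)
      intro j u hu
      have hble := norm_term_le hq (hb u hu) j
      have h1 : ‖-(q ^ (j + N) * Complex.exp (c * u))‖ ≤ 1 / 2 := by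
        rw [norm_neg]
        exact le_trans hble (by nlinarith [pow_le_one₀ (norm_nonneg q) hq.le (n := j)])
      have h2 := Complex.norm_log_one_add_half_le_self h1
      rw [show (1 : ℂ) + -(q ^ (j + N) * Complex.exp (c * u))
          = 1 - q ^ (j + N) * Complex.exp (c * u) by ring, norm_neg] at h2
      nlinarith [norm_nonneg (q ^ (j + N) * Complex.exp (c * u))]
    · filter_upwards with t
      apply DifferentiableOn.fun_sum
      intro j _
      intro u hu
      apply DifferentiableWithinAt.clog
      · exact (((differentiableAt_const _).sub (((differentiableAt_fun_id).const_mul c).cexp.const_mul _))).differentiableWithinAt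
      · have hble := norm_term_le hq (hb u hu) j
        have h12 : ‖q‖ ^ j * (1 / 2) ≤ 1 / 2 := by
          nlinarith [pow_le_one₀ (norm_nonneg q) hq.le (n := j)]
        have : ‖-(q ^ (j + N) * Complex.exp (c * u))‖ < 1 := by
          rw [norm_neg]
          exact lt_of_le_of_lt (hble.trans h12) (by norm_num)
        have := Complex.mem_slitPlane_of_norm_lt_one this
        rwa [show (1 : ℂ) + -(q ^ (j + N) * Complex.exp (c * u))
          = 1 - q ^ (j + N) * Complex.exp (c * u) by ring] at this
    · exact hU
  have heq : ∀ u ∈ U, PP q c N u = Complex.exp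
      (∑' j : ℕ, Complex.log (1 - q ^ (j + N) * Complex.exp (c * u))) :=
    fun u hu => PP_eq_exp_tsum hq (hb u hu)
  exact DifferentiableOn.congr (DifferentiableOn.cexp hS) heq

lemma PP_diffAt {q : ℂ} (hq : ‖q‖ < 1) (c : ℂ) (m : ℕ) (w : ℂ) :
    DifferentiableAt ℂ (PP q c m) w := by
  set M := Real.exp (‖c‖ * (‖w‖ + 1)) with hMdef
  have hM0 : 0 < M := Real.exp_pos _
  obtain ⟨k, hk⟩ : ∃ k : ℕ, ‖q‖ ^ (m + k) * M ≤ 1 / 2 := by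
    obtain ⟨k, hk⟩ := exists_pow_lt_of_lt_one (by positivity : (0:ℝ) < 1 / 2 / M) hq
    refine ⟨k, ?_⟩
    have h1 : ‖q‖ ^ (m + k) ≤ ‖q‖ ^ k :=
      pow_le_pow_of_le_one (norm_nonneg q) hq.le (Nat.le_add_left k m)
    calc ‖q‖ ^ (m + k) * M ≤ (1 / 2 / M) * M :=
          mul_le_mul (h1.trans hk.le) le_rfl hM0.le (by positivity)
      _ = 1 / 2 := by field_simp
  have hMb : ∀ u ∈ Metric.ball w 1, ‖Complex.exp (c * u)‖ ≤ M := by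
    intro u hu
    rw [Complex.norm_exp, hMdef]
    apply Real.exp_le_exp.2
    calc (c * u).re ≤ |(c * u).re| := le_abs_self _
      _ ≤ ‖c * u‖ := Complex.abs_re_le_norm _
      _ = ‖c‖ * ‖u‖ := norm_mul _ _
      _ ≤ ‖c‖ * (‖w‖ + 1) := by
          apply mul_le_mul_of_nonneg_left _ (norm_nonneg c)
          have := mem_ball_iff_norm.1 hu
          calc ‖u‖ = ‖w + (u - w)‖ := by ring_nf
            _ ≤ ‖w‖ + ‖u - w‖ := norm_add_le _ _
            _ ≤ ‖w‖ + 1 := by linarith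
  have hb : ∀ u ∈ Metric.ball w 1, ‖q‖ ^ (m + k) * ‖Complex.exp (c * u)‖ ≤ 1 / 2 := by
    intro u hu
    calc ‖q‖ ^ (m + k) * ‖Complex.exp (c * u)‖ ≤ ‖q‖ ^ (m + k) * M :=
          mul_le_mul_of_nonneg_left (hMb u hu) (by positivity)
      _ ≤ 1 / 2 := hk
  have hdiff := PP_diffOn hq Metric.isOpen_ball hb
  have hsplit : PP q c m = fun u => (∏ j ∈ Finset.range k, (1 - q ^ (j + m) * Complex.exp (c * u)))
      * PP q c (m + k) u := funext fun u => PP_split hq c u m k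
  rw [hsplit]
  apply DifferentiableAt.mul
  · apply DifferentiableAt.fun_finsetProd
    intro j _
    exact (differentiableAt_const _).sub (((differentiableAt_fun_id).const_mul c).cexp.const_mul _)
  · exact hdiff.differentiableAt (Metric.isOpen_ball.mem_nhds (Metric.mem_ball_self one_pos))

lemma PP_pos_ne_zero {q : ℂ} (hq : ‖q‖ < 1) : PP q 0 1 0 ≠ 0 := by
  obtain ⟨k, hk⟩ : ∃ k : ℕ, ‖q‖ ^ (1 + k) * ‖Complex.exp ((0:ℂ) * 0)‖ ≤ 1 / 2 :=
    exists_bound hq 0 0 1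
  rw [PP_split hq 0 0 1 k]
  apply mul_ne_zero
  · rw [Finset.prod_ne_zero_iff]
    intro j _
    have hn : ‖q ^ (j + 1) * Complex.exp ((0:ℂ) * 0)‖ < 1 := by
      rw [norm_mul, mul_zero, Complex.exp_zero, norm_one, mul_one, norm_pow]
      exact pow_lt_one₀ (norm_nonneg q) hq (Nat.succ_ne_zero j)
    intro hcon
    have h1 : q ^ (j + 1) * Complex.exp ((0:ℂ) * 0) = 1 := by linear_combination -hcon
    rw [h1, norm_one] at hn
    exact lt_irrefl _ hn
  · exact PP_ne_zero hq hk


lemma norm_q_lt_one {x : ℝ} (hx0 : 0 < x) (hx1 : x < 1) {s : ℂ} (hs : 0 < s.re) :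
    ‖xpow x (2 * s)‖ < 1 := by
  rw [xpow, Complex.norm_exp]
  have hlx : Real.log x < 0 := Real.log_neg hx0 hx1
  have hre : (2 * s * (Real.log x : ℂ)).re = 2 * s.re * Real.log x := by
    simp [Complex.mul_re, Complex.ofReal_re, Complex.ofReal_im]
  rw [hre]
  apply Real.exp_lt_one_iff.2
  nlinarith

lemma jTheta_eq (x : ℝ) (s u : ℂ) :
    jTheta x s u = xpow x (u ^ 2 / s - u) *
      (PP (xpow x (2 * s)) (2 * (Real.log x : ℂ)) 0 u *
        PP (xpow x (2 * s)) (-(2 * (Real.log x : ℂ))) 1 u *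
        PP (xpow x (2 * s)) 0 1 0) / (PP (xpow x (2 * s)) 0 1 0) ^ 3 := by
  set L : ℂ := (Real.log x : ℂ)
  set q : ℂ := xpow x (2 * s)
  have e1 : xpow x (2 * u) = Complex.exp ((2 * L) * u) := by
    rw [xpow]; ring_nf; rfl
  have e2 : (xpow x (2 * u))⁻¹ = Complex.exp ((-(2 * L)) * u) := by
    rw [e1, ← Complex.exp_neg]; ring_nf
  have eA : qPoch (xpow x (2 * u)) q = PP q (2 * L) 0 u := by
    refine tprod_congr fun j => ?_
    rw [e1]; norm_num
  have eB : qPoch (q * (xpow x (2 * u))⁻¹) q = PP q (-(2 * L)) 1 u := by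
    refine tprod_congr fun j => ?_
    rw [e2, pow_succ]; ring
  have eC : qPoch q q = PP q 0 1 0 := by
    refine tprod_congr fun j => ?_
    rw [pow_succ]
    norm_num [Complex.exp_zero]
  rw [jTheta, jacTheta0, eA, eB, eC]

noncomputable def Phi (x : ℝ) (s u : ℂ) : ℂ :=
  xpow x (u ^ 2 / s - u) *
    (PP (xpow x (2 * s)) (2 * (Real.log x : ℂ)) 1 u *
      PP (xpow x (2 * s)) (-(2 * (Real.log x : ℂ))) 1 u *
      PP (xpow x (2 * s)) 0 1 0) / (PP (xpow x (2 * s)) 0 1 0) ^ 3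

lemma jTheta_split {x : ℝ} (hx0 : 0 < x) (hx1 : x < 1) {s : ℂ} (hs : 0 < s.re) (u : ℂ) :
    jTheta x s u = (1 - Complex.exp ((2 * (Real.log x : ℂ)) * u)) * Phi x s u := by
  have hq := norm_q_lt_one hx0 hx1 hs
  rw [jTheta_eq, Phi, PP_split hq (2 * (Real.log x : ℂ)) u 0 1]
  rw [Finset.prod_range_one]
  norm_num
  ring

lemma jTheta_diff {x : ℝ} (hx0 : 0 < x) (hx1 : x < 1) {s : ℂ} (hs : 0 < s.re) :
    Differentiable ℂ (jTheta x s) := by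
  have hq := norm_q_lt_one hx0 hx1 hs
  have heq : jTheta x s = fun u => xpow x (u ^ 2 / s - u) *
      (PP (xpow x (2 * s)) (2 * (Real.log x : ℂ)) 0 u *
        PP (xpow x (2 * s)) (-(2 * (Real.log x : ℂ))) 1 u *
        PP (xpow x (2 * s)) 0 1 0) / (PP (xpow x (2 * s)) 0 1 0) ^ 3 :=
    funext fun u => jTheta_eq x s u
  rw [heq]
  intro w
  apply DifferentiableAt.div_const
  apply DifferentiableAt.mul
  · show DifferentiableAt ℂ (fun u : ℂ => Complex.exp ((u ^ 2 / s - u) * (Real.log x : ℂ))) w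
    apply DifferentiableAt.cexp
    apply DifferentiableAt.mul_const
    exact ((differentiableAt_fun_id.pow 2).div_const s).sub differentiableAt_fun_id
  · exact ((PP_diffAt hq _ _ w).mul (PP_diffAt hq _ _ w)).mul (differentiableAt_const _)

lemma Phi_diff {x : ℝ} (hx0 : 0 < x) (hx1 : x < 1) {s : ℂ} (hs : 0 < s.re) :
    Differentiable ℂ (Phi x s) := by
  have hq := norm_q_lt_one hx0 hx1 hs
  intro w
  apply DifferentiableAt.div_const
  apply DifferentiableAt.mul
  · show DifferentiableAt ℂ (fun u : ℂ => Complex.exp ((u ^ 2 / s - u) * (Real.log x : ℂ))) w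
    apply DifferentiableAt.cexp
    apply DifferentiableAt.mul_const
    exact ((differentiableAt_fun_id.pow 2).div_const s).sub differentiableAt_fun_id
  · exact ((PP_diffAt hq _ _ w).mul (PP_diffAt hq _ _ w)).mul (differentiableAt_const _)

lemma Phi_zero {x : ℝ} (hx0 : 0 < x) (hx1 : x < 1) {s : ℂ} (hs : 0 < s.re) :
    Phi x s 0 = 1 := by
  have hq := norm_q_lt_one hx0 hx1 hs
  have hc := PP_pos_ne_zero hq
  have hA : PP (xpow x (2 * s)) (2 * (Real.log x : ℂ)) 1 0 = PP (xpow x (2 * s)) 0 1 0 := by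
    refine tprod_congr fun j => by norm_num
  have hB : PP (xpow x (2 * s)) (-(2 * (Real.log x : ℂ))) 1 0 = PP (xpow x (2 * s)) 0 1 0 := by
    refine tprod_congr fun j => by norm_num
  have hE : xpow x ((0:ℂ) ^ 2 / s - 0) = 1 := by
    rw [xpow]
    norm_num [Complex.exp_zero]
  rw [Phi, hA, hB, hE]
  field_simp

end Stmt11

open Stmt11 in
theorem stmt11 (x : ℝ) (hx0 : 0 < x) (hx1 : x < 1) (s : ℂ) (hs : 0 < s.re) (r : ℂ)
    (h1 : jTheta x s 1 ≠ 0) (h2 : jTheta x s r ≠ 0) (h3 : jTheta x s (r - 1) ≠ 0) :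
    ∃ (g : ℂ → ℂ) (U : Set ℂ), IsOpen U ∧ (0 : ℂ) ∈ U ∧ DifferentiableOn ℂ g U ∧
      ∀ u ∈ U, u ≠ 0 →
        g u =
          jTheta x s (u + 1) * jTheta x s (u + (r - 1)) /
              (jTheta x s u * jTheta x s (u + r)) +
            jTheta x s (-u + 1) * jTheta x s (-u + (r - 1)) /
              (jTheta x s (-u) * jTheta x s (-u + r)) := by
  have hlx : Real.log x < 0 := Real.log_neg hx0 hx1
  set L : ℂ := (Real.log x : ℂ) with hLdef
  have hL0 : L ≠ 0 := by
    rw [hLdef]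
    exact Complex.ofReal_ne_zero.2 (ne_of_lt hlx)
  set h : ℂ → ℂ := jTheta x s with hhdef
  have hdiff : Differentiable ℂ h := jTheta_diff hx0 hx1 hs
  have hPhidiff : Differentiable ℂ (Phi x s) := Phi_diff hx0 hx1 hs
  set f : ℂ → ℂ := fun u => 1 - Complex.exp ((2 * L) * u) with hfdef
  have hfd : Differentiable ℂ f :=
    (differentiable_const _).sub (differentiable_fun_id.const_mul (2 * L)).cexp
  have hsplit : ∀ u, h u = f u * Phi x s u := fun u => jTheta_split hx0 hx1 hs u
  set ψ : ℂ → ℂ := dslope f 0 with hψdef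
  have hfψ : ∀ u, f u = u * ψ u := by
    intro u
    have hd := sub_smul_dslope f 0 u
    simp only [sub_zero, smul_eq_mul] at hd
    have hf0 : f 0 = 0 := by simp [hfdef]
    rw [hf0, sub_zero] at hd
    exact hd.symm
  have hψ0 : ψ 0 = -(2 * L) := by
    rw [hψdef, dslope_same]
    have hd1 : HasDerivAt (fun u : ℂ => (2 * L) * u) (2 * L) 0 := by
      simpa using (hasDerivAt_id (0 : ℂ)).const_mul (2 * L)
    have hd2 : HasDerivAt (fun u : ℂ => Complex.exp ((2 * L) * u)) (2 * L) 0 := by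
      have := hd1.cexp
      simpa using this
    have hd3 : HasDerivAt f (0 - 2 * L) 0 := (hasDerivAt_const (0 : ℂ) (1 : ℂ)).sub hd2
    rw [hd3.deriv]
    ring
  have hψan : AnalyticAt ℂ ψ 0 := by
    obtain ⟨p, hp⟩ := hfd.analyticAt 0
    exact ⟨p.fslope, hp.has_fpower_series_dslope_fslope⟩
  set P : ℂ → ℂ := fun v => h (v + 1) * h (v + (r - 1)) with hPdef
  set G : ℂ → ℂ := fun u => P u * (ψ (-u) * Phi x s (-u) * h (-u + r))
      - P (-u) * (ψ u * Phi x s u * h (u + r)) with hGdef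
  have hnegan : AnalyticAt ℂ (fun u : ℂ => -u) 0 :=
    (differentiable_fun_id.neg (𝕜 := ℂ)).analyticAt 0
  have hψnegan : AnalyticAt ℂ (fun u : ℂ => ψ (-u)) 0 := by
    have hg : AnalyticAt ℂ ψ (-(0 : ℂ)) := by rw [neg_zero]; exact hψan
    have hcomp := hg.comp hnegan
    simpa [Function.comp_def] using hcomp
  have hPdiff : Differentiable ℂ P := by
    apply Differentiable.mul
    · exact fun w => (hdiff (w + 1)).comp w ((differentiable_fun_id.add_const 1) w)
    · exact fun w => (hdiff (w + (r - 1))).comp w ((differentiable_fun_id.add_const (r - 1)) w)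
  have hPan : AnalyticAt ℂ P 0 := hPdiff.analyticAt 0
  have hPnegan : AnalyticAt ℂ (fun u : ℂ => P (-u)) 0 := by
    have hcomp : Differentiable ℂ (fun u : ℂ => P (-u)) :=
      fun w => (hPdiff (-w)).comp w (differentiable_fun_id.neg w)
    exact hcomp.analyticAt 0
  have hPhinegan : AnalyticAt ℂ (fun u : ℂ => Phi x s (-u)) 0 := by
    have hcomp : Differentiable ℂ (fun u : ℂ => Phi x s (-u)) :=
      fun w => (hPhidiff (-w)).comp w (differentiable_fun_id.neg w)
    exact hcomp.analyticAt 0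
  have hhnegr : AnalyticAt ℂ (fun u : ℂ => h (-u + r)) 0 := by
    have hcomp : Differentiable ℂ (fun u : ℂ => h (-u + r)) :=
      fun w => (hdiff (-w + r)).comp w (((differentiable_fun_id.neg).add_const r) w)
    exact hcomp.analyticAt 0
  have hhr : AnalyticAt ℂ (fun u : ℂ => h (u + r)) 0 := by
    have hcomp : Differentiable ℂ (fun u : ℂ => h (u + r)) :=
      fun w => (hdiff (w + r)).comp w ((differentiable_fun_id.add_const r) w)
    exact hcomp.analyticAt 0
  have hGan : AnalyticAt ℂ G 0 :=
    (hPan.mul ((hψnegan.mul hPhinegan).mul hhnegr)).sub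
      (hPnegan.mul ((hψan.mul (hPhidiff.analyticAt 0)).mul hhr))
  have hG0 : G 0 = 0 := by simp [hGdef]
  set γ : ℂ → ℂ := dslope G 0 with hγdef
  have hγan : AnalyticAt ℂ γ 0 := by
    obtain ⟨p, hp⟩ := hGan
    exact ⟨p.fslope, hp.has_fpower_series_dslope_fslope⟩
  have hψne : ψ 0 ≠ 0 := by
    rw [hψ0]
    simp only [ne_eq, neg_eq_zero, mul_eq_zero, not_or]
    exact ⟨two_ne_zero, hL0⟩
  have hPhine : Phi x s 0 ≠ 0 := by rw [Phi_zero hx0 hx1 hs]; exact one_ne_zero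
  have hnegt : Filter.Tendsto (fun u : ℂ => -u) (nhds 0) (nhds 0) := by
    simpa using (continuous_neg (G := ℂ)).tendsto (0 : ℂ)
  have e1 : ∀ᶠ u in nhds (0 : ℂ), DifferentiableAt ℂ γ u :=
    hγan.eventually_analyticAt.mono fun z hz => hz.differentiableAt
  have e2 : ∀ᶠ u in nhds (0 : ℂ), DifferentiableAt ℂ ψ u :=
    hψan.eventually_analyticAt.mono fun z hz => hz.differentiableAt
  have e3 : ∀ᶠ u in nhds (0 : ℂ), DifferentiableAt ℂ ψ (-u) := hnegt.eventually e2
  have e4 : ∀ᶠ u in nhds (0 : ℂ), ψ u ≠ 0 := hψan.continuousAt.eventually_ne hψne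
  have e5 : ∀ᶠ u in nhds (0 : ℂ), ψ (-u) ≠ 0 := hnegt.eventually e4
  have e6 : ∀ᶠ u in nhds (0 : ℂ), Phi x s u ≠ 0 :=
    (hPhidiff.continuous.continuousAt).eventually_ne hPhine
  have e7 : ∀ᶠ u in nhds (0 : ℂ), Phi x s (-u) ≠ 0 := hnegt.eventually e6
  have e8 : ∀ᶠ u in nhds (0 : ℂ), h (u + r) ≠ 0 := by
    have hc : ContinuousAt (fun u : ℂ => h (u + r)) 0 :=
      (hdiff.comp (differentiable_fun_id.add_const r)).continuous.continuousAt
    exact hc.eventually_ne (by simpa using h2)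
  have e9 : ∀ᶠ u in nhds (0 : ℂ), h (-u + r) ≠ 0 := by
    have hc : ContinuousAt (fun u : ℂ => h (-u + r)) 0 :=
      (hdiff.comp ((differentiable_fun_id.neg).add_const r)).continuous.continuousAt
    exact hc.eventually_ne (by simpa using h2)
  have hev : ∀ᶠ u in nhds (0 : ℂ),
      (DifferentiableAt ℂ γ u ∧ DifferentiableAt ℂ ψ u ∧ DifferentiableAt ℂ ψ (-u)) ∧
      (ψ u ≠ 0 ∧ ψ (-u) ≠ 0 ∧ Phi x s u ≠ 0 ∧ Phi x s (-u) ≠ 0 ∧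
        h (u + r) ≠ 0 ∧ h (-u + r) ≠ 0) := by
    filter_upwards [e1, e2, e3, e4, e5, e6, e7, e8, e9] with u a1 a2 a3 a4 a5 a6 a7 a8 a9
    exact ⟨⟨a1, a2, a3⟩, a4, a5, a6, a7, a8, a9⟩
  obtain ⟨U, hUprop, hUopen, hU0⟩ := eventually_nhds_iff.1 hev
  refine ⟨fun u => γ u / (ψ u * Phi x s u * h (u + r) *
    (ψ (-u) * Phi x s (-u) * h (-u + r))), U, hUopen, hU0, ?_, ?_⟩
  · intro u hu
    obtain ⟨⟨d1, d2, d3⟩, n1, n2, n3, n4, n5, n6⟩ := hUprop u hu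
    apply DifferentiableAt.differentiableWithinAt
    apply DifferentiableAt.div d1
    · apply DifferentiableAt.mul
      · exact (d2.mul (hPhidiff u)).mul
          ((hdiff (u + r)).comp u ((differentiable_fun_id.add_const r) u))
      · apply DifferentiableAt.mul
        · apply DifferentiableAt.mul
          · exact d3.comp u (differentiable_fun_id.neg u)
          · exact (hPhidiff (-u)).comp u (differentiable_fun_id.neg u)
        · exact (hdiff (-u + r)).comp u (((differentiable_fun_id.neg).add_const r) u)
    · exact mul_ne_zero (mul_ne_zero (mul_ne_zero n1 n3) n5)
        (mul_ne_zero (mul_ne_zero n2 n4) n6)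
  · intro u hu hune
    obtain ⟨⟨_, _, _⟩, n1, n2, n3, n4, n5, n6⟩ := hUprop u hu
    have key1 : h u = u * ψ u * Phi x s u := by
      rw [hsplit u, hfψ u]
    have key2 : h (-u) = -u * ψ (-u) * Phi x s (-u) := by
      rw [hsplit (-u), hfψ (-u)]
    have hγu : γ u = G u / u := by
      rw [hγdef, dslope_of_ne G hune, slope_def_field, hG0, sub_zero, sub_zero]
    have hune' : -u ≠ 0 := neg_ne_zero.2 hune
    have hc : u * ψ u * Phi x s u * h (u + r) ≠ 0 :=
      mul_ne_zero (mul_ne_zero (mul_ne_zero hune n1) n3) n5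
    have hd : -u * ψ (-u) * Phi x s (-u) * h (-u + r) ≠ 0 :=
      mul_ne_zero (mul_ne_zero (mul_ne_zero hune' n2) n4) n6
    have hnum : u * (ψ u * Phi x s u * h (u + r) * (ψ (-u) * Phi x s (-u) * h (-u + r))) ≠ 0 :=
      mul_ne_zero hune (mul_ne_zero (mul_ne_zero (mul_ne_zero n1 n3) n5)
        (mul_ne_zero (mul_ne_zero n2 n4) n6))
    have hden : (u * ψ u * Phi x s u * h (u + r)) * (-u * ψ (-u) * Phi x s (-u) * h (-u + r)) ≠ 0 :=
      mul_ne_zero hc hd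
    show γ u / (ψ u * Phi x s u * h (u + r) * (ψ (-u) * Phi x s (-u) * h (-u + r))) = _
    rw [hγu, key1, key2, div_add_div _ _ hc hd, div_div, div_eq_div_iff hnum hden]
    simp only [hGdef, hPdef]
    ring
end
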